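/- Let S and A be nonempty finite types, p : S → A → PMF S, r : S → A → ℝ, γ ∈ [0,1), T the Bellman optimality operator, and V* its unique fixed point. Then for every V₀ : S → ℝ and every n ∈ ℕ, ‖T^[n] V₀ − V*‖_∞ ≤ γ^n · ‖V₀ − V*‖_∞; in particular the value-iteration sequence n ↦ T^[n] V₀ converges to V* in the supremum norm. -/

import Mathlib

/-- The Bellman optimality operator of a finite MDP:
`(T V)(s) = max_{a ∈ A} (r s a + γ * ∑ s', p(s'|s,a) * V s')`. -/
noncomputable def bellmanOpt {S A : Type*} [Fintype S] [Fintype A] [Nonempty A]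
    (p : S → A → PMF S) (r : S → A → ℝ) (γ : ℝ) (V : S → ℝ) : S → ℝ :=
  fun s => Finset.univ.sup' Finset.univ_nonempty
    (fun a : A => r s a + γ * ∑ s' : S, (p s a s').toReal * V s')

lemma pmf_sum_toReal {S : Type*} [Fintype S] (q : PMF S) :
    ∑ s' : S, (q s').toReal = 1 := by
  rw [← ENNReal.toReal_sum (fun s _ => q.apply_ne_top s)]
  rw [← tsum_fintype (L := SummationFilter.unconditional _), q.tsum_coe, ENNReal.toReal_one]

lemma bellman_contraction {S A : Type*} [Fintype S] [Fintype A] [Nonempty S] [Nonempty A]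
    (p : S → A → PMF S) (r : S → A → ℝ) (γ : ℝ) (hγ0 : 0 ≤ γ)
    (U V : S → ℝ) :
    ‖bellmanOpt p r γ U - bellmanOpt p r γ V‖ ≤ γ * ‖U - V‖ := by
  rw [pi_norm_le_iff_of_nonneg (by positivity)]
  intro s
  have key : ∀ (W W' : S → ℝ),
      bellmanOpt p r γ W s - bellmanOpt p r γ W' s ≤ γ * ‖W - W'‖ := by
    intro W W'
    rw [sub_le_iff_le_add]
    unfold bellmanOpt
    apply Finset.sup'_le
    intro a _
    have hle : γ * ∑ s' : S, (p s a s').toReal * W s'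
        ≤ γ * ∑ s' : S, (p s a s').toReal * W' s' + γ * ‖W - W'‖ := by
      have h1 : ∑ s' : S, (p s a s').toReal * W s'
          - ∑ s' : S, (p s a s').toReal * W' s'
          = ∑ s' : S, (p s a s').toReal * (W s' - W' s') := by
        rw [← Finset.sum_sub_distrib]; congr 1; ext s'; ring
      have h2 : ∑ s' : S, (p s a s').toReal * (W s' - W' s') ≤ ‖W - W'‖ := by
        calc ∑ s' : S, (p s a s').toReal * (W s' - W' s')
            ≤ ∑ s' : S, (p s a s').toReal * ‖W - W'‖ := by
              apply Finset.sum_le_sum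
              intro s' _
              apply mul_le_mul_of_nonneg_left _ ENNReal.toReal_nonneg
              calc W s' - W' s' ≤ |W s' - W' s'| := le_abs_self _
                _ = ‖(W - W') s'‖ := by simp [Real.norm_eq_abs]
                _ ≤ ‖W - W'‖ := norm_le_pi_norm _ _
          _ = ‖W - W'‖ := by rw [← Finset.sum_mul, pmf_sum_toReal, one_mul]
      nlinarith [h1, h2]
    have hsup : r s a + γ * ∑ s' : S, (p s a s').toReal * W' s'
        ≤ Finset.univ.sup' Finset.univ_nonempty
            (fun a : A => r s a + γ * ∑ s' : S, (p s a s').toReal * W' s') :=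
      Finset.le_sup' (fun a : A => r s a + γ * ∑ s' : S, (p s a s').toReal * W' s')
        (Finset.mem_univ a)
    linarith
  have h1 := key U V
  have h2 := key V U
  rw [Real.norm_eq_abs, Pi.sub_apply, abs_sub_le_iff]
  have hnorm : ‖V - U‖ = ‖U - V‖ := by rw [← norm_neg]; congr 1; abel
  rw [hnorm] at h2
  exact ⟨h1, h2⟩

/-- Value iteration converges to the (unique) fixed point `V*` of the Bellman
optimality operator at a geometric rate:
`‖T^[n] V₀ − V*‖ ≤ γ^n ‖V₀ − V*‖`, hence `T^[n] V₀ → V*` in the sup norm. -/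
theorem bellmanOpt_value_iteration {S A : Type*} [Fintype S] [Fintype A]
    [Nonempty S] [Nonempty A]
    (p : S → A → PMF S) (r : S → A → ℝ) (γ : ℝ) (hγ0 : 0 ≤ γ) (hγ1 : γ < 1)
    (Vstar : S → ℝ) (hfix : bellmanOpt p r γ Vstar = Vstar) :
    ∀ V₀ : S → ℝ,
      (∀ n : ℕ, ‖(bellmanOpt p r γ)^[n] V₀ - Vstar‖ ≤ γ ^ n * ‖V₀ - Vstar‖) ∧
      Filter.Tendsto (fun n : ℕ => (bellmanOpt p r γ)^[n] V₀)
        Filter.atTop (nhds Vstar) := by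
  intro V₀
  have hbound : ∀ n : ℕ, ‖(bellmanOpt p r γ)^[n] V₀ - Vstar‖ ≤ γ ^ n * ‖V₀ - Vstar‖ := by
    intro n
    induction n with
    | zero => simp
    | succ n ih =>
      rw [Function.iterate_succ_apply']
      calc ‖bellmanOpt p r γ ((bellmanOpt p r γ)^[n] V₀) - Vstar‖
          = ‖bellmanOpt p r γ ((bellmanOpt p r γ)^[n] V₀) - bellmanOpt p r γ Vstar‖ := by
            rw [hfix]
        _ ≤ γ * ‖(bellmanOpt p r γ)^[n] V₀ - Vstar‖ :=
            bellman_contraction p r γ hγ0 _ _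
        _ ≤ γ * (γ ^ n * ‖V₀ - Vstar‖) := by gcongr
        _ = γ ^ (n + 1) * ‖V₀ - Vstar‖ := by ring
  refine ⟨hbound, ?_⟩
  have h0 : Filter.Tendsto (fun n : ℕ => (bellmanOpt p r γ)^[n] V₀ - Vstar)
      Filter.atTop (nhds 0) := by
    apply squeeze_zero_norm hbound
    have := (tendsto_pow_atTop_nhds_zero_of_lt_one hγ0 hγ1).mul_const ‖V₀ - Vstar‖
    simpa using this
  have := h0.add_const Vstar
  simpa using this
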